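/- For each fixed nonzero integer x, all sufficiently large integers t with t ≢ x (mod 2) satisfy ã₁(x, t) ≠ 0. -/

import Mathlib

open Complex Real Filter Asymptotics

noncomputable section

/-- Number of turns of the checker path with `T` moves whose set of indices of
rightward moves (among moves `0, …, T-1`) is `R`. -/
def turnsOf (T : ℕ) (R : Finset ℕ) : ℕ :=
  ((Finset.Ico 1 T).filter fun i => ¬((i ∈ R) ↔ (i - 1 ∈ R))).card

/-- The Feynman-checkers wave function on the integer lattice, with `μ = m·ε`:
`waveA X T μ = a(X·ε, T·ε, m, ε)`.  A checker path from `(0,0)` to `(X·ε, T·ε)`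
consists of `T` moves, each `(ε,ε)` ("right") or `(-ε,ε)` ("left"); it is
determined by the set `R ⊆ {0,…,T-1}` of indices of its rightward moves.  The
path ends at `X·ε` iff `R.card - (T - R.card) = X`, and its second point is
`(ε,ε)` iff `0 ∈ R`. -/
def waveA (X : ℤ) (T : ℕ) (μ : ℝ) : ℂ :=
  (((1 + μ ^ 2) ^ ((1 - (T : ℝ)) / 2) : ℝ) : ℂ) * Complex.I *
    ∑ R ∈ (Finset.range T).powerset,
      if 0 ∈ R ∧ 2 * (R.card : ℤ) - (T : ℤ) = X then
        (-Complex.I * (μ : ℂ)) ^ turnsOf T R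
      else 0

/-- The wave function `a(x, t, m, ε)` for lattice points `(x,t) ∈ εℤ²`. -/
def wf (x t m ε : ℝ) : ℂ := waveA ⌊x / ε⌋ ⌊t / ε⌋.toNat (m * ε)

/-- `ã₁(x, t, m, ε) = Re a(x, t+ε, m, ε)`. -/
def a1 (x t m ε : ℝ) : ℝ := (wf x (t + ε) m ε).re

/-- `ã₂(x, t, m, ε) = Im a(x+ε, t+ε, m, ε)`. -/
def a2 (x t m ε : ℝ) : ℝ := (wf (x + ε) (t + ε) m ε).im

end

section AuxFeynman
open Polynomial Finset

lemma one_sub_X_pow_eq (a : ℕ) :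
    ((1:ℤ[X]) - X)^a = ∑ k ∈ range (a+1), C ((-1)^k * (a.choose k : ℤ)) * X^k := by
  rw [sub_eq_add_neg, add_comm, add_pow]
  refine Finset.sum_congr rfl fun k _ => ?_
  rw [neg_pow]
  simp only [C_mul, C_pow, C_neg, C_1, C_eq_natCast]
  ring

lemma coeff_one_sub_X_pow (a j : ℕ) :
    (((1:ℤ[X]) - X)^a).coeff j = (-1)^j * (a.choose j : ℤ) := by
  rw [one_sub_X_pow_eq, finset_sum_coeff]
  simp only [coeff_C_mul, coeff_X_pow]
  rw [Finset.sum_eq_single j]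
  · simp
  · intro k _ hk; simp [Ne.symm hk]
  · intro h
    simp only [mem_range, not_lt] at h
    simp [Nat.choose_eq_zero_of_lt (by omega : a < j)]

lemma one_sub_X_sq_pow_eq (b : ℕ) :
    ((1:ℤ[X]) - X^2)^b = ∑ k ∈ range (b+1), C ((-1)^k * (b.choose k : ℤ)) * X^(2*k) := by
  rw [sub_eq_add_neg, add_comm, add_pow]
  refine Finset.sum_congr rfl fun k _ => ?_
  rw [neg_pow, pow_mul]
  simp only [C_mul, C_pow, C_neg, C_1, C_eq_natCast]
  ring

lemma coeff_one_sub_X_sq_pow (b n : ℕ) :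
    (((1:ℤ[X]) - X^2)^b).coeff n
      = if 2 ∣ n then (-1)^(n/2) * (b.choose (n/2) : ℤ) else 0 := by
  rw [one_sub_X_sq_pow_eq, finset_sum_coeff]
  simp only [coeff_C_mul, coeff_X_pow]
  by_cases hdvd : 2 ∣ n
  · rw [Finset.sum_eq_single (n/2)]
    · have h2 : n = 2 * (n/2) := (Nat.mul_div_cancel' hdvd).symm
      simp [← h2, hdvd]
    · intro k _ hk
      have : ¬ (n = 2*k) := by omega
      simp [this]
    · intro h
      simp only [mem_range, not_lt] at h
      have h' : b.choose (n/2) = 0 := Nat.choose_eq_zero_of_lt (by omega)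
      simp [h', hdvd]
  · rw [if_neg hdvd]
    refine Finset.sum_eq_zero fun k _ => ?_
    have : ¬ (n = 2*k) := by rintro rfl; exact hdvd ⟨k, by ring⟩
    simp [this]

/-- `S1 a b = ∑ j, (-1)^j C(a,j) C(b,j)`. -/
def S1 (a b : ℕ) : ℤ := ∑ j ∈ range (b+1), (-1)^j * (a.choose j) * (b.choose j)

lemma S1_eq_coeff (a b : ℕ) :
    S1 a b = (((1:ℤ[X]) - X)^a * (1 + X)^b).coeff b := by
  rw [coeff_mul, Finset.Nat.sum_antidiagonal_eq_sum_range_succ_mk]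
  refine Finset.sum_congr rfl fun j hj => ?_
  rw [coeff_one_sub_X_pow, coeff_one_add_X_pow]
  simp only [mem_range] at hj
  rw [Nat.choose_symm (by omega : j ≤ b)]

lemma S1_eq_range (a b n : ℕ) (hn : b + 1 ≤ n) :
    S1 a b = ∑ j ∈ range n, (-1:ℤ)^j * (a.choose j) * (b.choose j) := by
  refine Finset.sum_subset (Finset.range_subset_range.2 hn) fun j _ hj => ?_
  simp only [mem_range, not_lt] at hj
  simp [Nat.choose_eq_zero_of_lt (by omega : b < j)]

lemma S1_symm (a b : ℕ) : S1 a b = S1 b a := by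
  rw [S1_eq_range a b (a+b+1) (by omega), S1_eq_range b a (a+b+1) (by omega)]
  exact Finset.sum_congr rfl fun j _ => by ring

/-- central coefficient helper -/
def E (b m : ℕ) : ℤ := if 2 ∣ m then (-1)^(m/2) * (b.choose (m/2) : ℤ) else 0

lemma S1_shift (d b : ℕ) (hdb : d ≤ b) :
    S1 (b+d) b = ∑ j ∈ range (d+1), (-1:ℤ)^j * (d.choose j) * E b (b-j) := by
  rw [S1_eq_coeff]
  have h1 : ((1:ℤ[X]) - X)^(b+d) * (1+X)^b = ((1:ℤ[X])-X)^d * ((1:ℤ[X]) - X^2)^b := by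
    rw [pow_add]
    have : ((1:ℤ[X]) - X^2) = (1-X)*(1+X) := by ring
    rw [this, mul_pow]
    ring
  rw [h1, coeff_mul, Finset.Nat.sum_antidiagonal_eq_sum_range_succ_mk]
  rw [← Finset.sum_subset (Finset.range_subset_range.2 (by omega : d+1 ≤ b+1))]
  · refine Finset.sum_congr rfl fun j _ => ?_
    rw [coeff_one_sub_X_pow, coeff_one_sub_X_sq_pow]
    rfl
  · intro j _ hj
    simp only [mem_range, not_lt] at hj
    rw [coeff_one_sub_X_pow]
    simp [Nat.choose_eq_zero_of_lt (by omega : d < j)]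

def Zsum (d e b h : ℕ) : ℤ :=
  ∑ s ∈ range ((d-e)/2 + 1), (-1:ℤ)^s * (d.choose (2*s+e)) * (b.choose (h-s))

lemma neg_one_pow_sub (h s : ℕ) (hs : s ≤ h) :
    (-1:ℤ)^(h-s) = (-1)^h * (-1)^s := by
  have h2 : (-1:ℤ)^(h-s) * (-1)^s = (-1)^h := by
    rw [← pow_add]; congr 1; omega
  have h3 : (-1:ℤ)^s * (-1)^s = 1 := by
    rw [← pow_add]; exact Even.neg_one_pow ⟨s, rfl⟩
  calc (-1:ℤ)^(h-s) = (-1)^(h-s) * ((-1)^s * (-1)^s) := by rw [h3, mul_one]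
    _ = ((-1)^(h-s) * (-1)^s) * (-1)^s := by ring
    _ = (-1)^h * (-1)^s := by rw [h2]

lemma S1_shift_parity (d b h e : ℕ) (he : e < 2) (hed : e ≤ d) (hb : b = 2*h + e)
    (hdb : d ≤ b) :
    S1 (b+d) b = (-1:ℤ)^e * (-1)^h * Zsum d e b h := by
  rw [S1_shift d b hdb]
  have hzero : ∀ j ∈ range (d+1), ¬ (j % 2 = e % 2) →
      (-1:ℤ)^j * (d.choose j) * E b (b-j) = 0 := by
    intro j hj1 hj2
    simp only [mem_range] at hj1
    have : ¬ (2 ∣ (b - j)) := by omega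
    simp [E, this]
  rw [← Finset.sum_filter_of_ne (p := fun j => j % 2 = e % 2) (fun j hj hne => by
        by_contra hcon; exact hne (hzero j hj hcon))]
  rw [Zsum, Finset.mul_sum]
  refine Finset.sum_nbij' (fun j => (j - e)/2) (fun s => 2*s + e) ?_ ?_ ?_ ?_ ?_
  · intro j hj
    simp only [Finset.mem_filter, mem_range] at hj
    simp only [mem_range]
    omega
  · intro s hs
    simp only [mem_range] at hs
    simp only [Finset.mem_filter, mem_range]
    omega
  · intro j hj
    simp only [Finset.mem_filter, mem_range] at hj
    show 2 * ((j - e)/2) + e = j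
    omega
  · intro s _
    show (2*s + e - e)/2 = s
    omega
  · intro j hj
    simp only [Finset.mem_filter, mem_range] at hj
    set s := (j - e)/2 with hs
    have hj2 : j = 2*s + e := by omega
    have hsh : s ≤ h := by omega
    have hE : E b (b - j) = (-1:ℤ)^(h-s) * (b.choose (h-s)) := by
      have hdvd : 2 ∣ (b - j) := by omega
      have h2 : (b - j)/2 = h - s := by omega
      simp [E, hdvd, h2]
    have hpow : (-1:ℤ)^j = (-1)^e := by
      rw [hj2, pow_add, pow_mul, neg_one_sq, one_pow, one_mul]
    rw [hE, hpow]
    show ((-1:ℤ))^e * (d.choose j) * ((-1)^(h-s) * (b.choose (h-s)))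
        = (-1)^e * (-1)^h * ((-1)^s * (d.choose (2*s+e)) * (b.choose (h-s)))
    rw [← hj2, neg_one_pow_sub h s hsh]
    ring

lemma choose_shift (b h : ℕ) (hh : h ≤ b) :
    ∀ s, s ≤ h → (b.choose (h-s)) * ∏ i ∈ range s, (b - h + 1 + i)
      = b.choose h * ∏ i ∈ range s, (h - i) := by
  intro s
  induction s with
  | zero => simp
  | succ s ih =>
    intro hs
    rw [Finset.prod_range_succ, Finset.prod_range_succ, ← mul_assoc, ← mul_assoc]
    have key : b.choose (h - (s+1)) * (b - h + 1 + s) = b.choose (h - s) * (h - s) := by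
      have h2 := Nat.choose_succ_right_eq b (h - (s+1))
      have h3 : b - (h - (s+1)) = b - h + 1 + s := by omega
      have h4 : h - (s+1) + 1 = h - s := by omega
      rw [h3, h4] at h2
      rw [← h2, ← h4]
    calc (b.choose (h-(s+1)) * ∏ i ∈ range s, (b - h + 1 + i)) * (b - h + 1 + s)
        = (b.choose (h-(s+1)) * (b - h + 1 + s)) * ∏ i ∈ range s, (b - h + 1 + i) := by ring
      _ = (b.choose (h-s) * (h - s)) * ∏ i ∈ range s, (b - h + 1 + i) := by rw [key]
      _ = (b.choose (h-s) * ∏ i ∈ range s, (b - h + 1 + i)) * (h - s) := by ring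
      _ = (b.choose h * ∏ i ∈ range s, (h - i)) * (h - s) := by rw [ih (by omega)]

/-- The auxiliary polynomial. -/
noncomputable def G (d e : ℕ) : Polynomial ℤ :=
  ∑ s ∈ range ((d-e)/2 + 1), Polynomial.C ((-1:ℤ)^s * (d.choose (2*s+e))) *
    (∏ i ∈ range s, (Polynomial.X - Polynomial.C (i:ℤ))) *
    (∏ i ∈ range ((d-e)/2 - s), (Polynomial.X + Polynomial.C ((e:ℤ) + 1 + s + i)))

lemma G_eval (d e : ℕ) (z : ℤ) : (G d e).eval z
    = ∑ s ∈ range ((d-e)/2 + 1), (-1:ℤ)^s * (d.choose (2*s+e)) *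
      (∏ i ∈ range s, (z - i)) * (∏ i ∈ range ((d-e)/2 - s), (z + e + 1 + s + i)) := by
  rw [G, Polynomial.eval_finset_sum]
  refine Finset.sum_congr rfl fun s _ => ?_
  simp only [Polynomial.eval_mul, Polynomial.eval_C, Polynomial.eval_prod,
    Polynomial.eval_sub, Polynomial.eval_add, Polynomial.eval_X]
  congr 1
  exact Finset.prod_congr rfl fun i _ => by ring

lemma Zsum_mul_eq (d e b h : ℕ) (he : e < 2) (hb : b = 2*h + e) (hdh : d ≤ h) :
    Zsum d e b h * ∏ i ∈ range ((d-e)/2), ((b:ℤ) - h + 1 + i)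
      = (b.choose h : ℤ) * (G d e).eval (h:ℤ) := by
  rw [G_eval, Zsum, Finset.sum_mul, Finset.mul_sum]
  refine Finset.sum_congr rfl fun s hs => ?_
  simp only [mem_range] at hs
  set M := (d-e)/2 with hM
  have hsM : s ≤ M := by omega
  have hsh : s ≤ h := by omega
  have hhb : h ≤ b := by omega
  have hsplit : ∏ i ∈ range M, ((b:ℤ) - h + 1 + i)
      = (∏ i ∈ range s, ((b:ℤ) - h + 1 + i)) * ∏ i ∈ range (M - s), ((h:ℤ) + e + 1 + s + i) := by
    have hadd := Finset.prod_range_add (fun i => ((b:ℤ) - h + 1 + i)) s (M - s)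
    rw [show s + (M-s) = M by omega] at hadd
    rw [hadd]
    congr 1
    refine Finset.prod_congr rfl fun i _ => ?_
    have hbz : ((b:ℤ)) = 2*(h:ℤ) + e := by exact_mod_cast congrArg (Nat.cast : ℕ → ℤ) hb
    rw [hbz]
    push_cast
    ring
  have hcast : (b.choose (h-s) : ℤ) * ∏ i ∈ range s, ((b:ℤ) - h + 1 + i)
      = (b.choose h : ℤ) * ∏ i ∈ range s, ((h:ℤ) - i) := by
    have hc := congrArg (Nat.cast : ℕ → ℤ) (choose_shift b h hhb s hsh)
    push_cast at hc
    have e1 : ∏ i ∈ range s, ((b:ℤ) - h + 1 + i) = ∏ x ∈ range s, ((b - h : ℕ) + 1 + (x:ℤ)) := by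
      refine Finset.prod_congr rfl fun i _ => ?_
      rw [Nat.cast_sub hhb]
    have e2 : ∏ i ∈ range s, ((h:ℤ) - i) = ∏ x ∈ range s, (((h - x : ℕ) : ℤ)) := by
      refine Finset.prod_congr rfl fun i hi => ?_
      simp only [mem_range] at hi
      rw [Nat.cast_sub (by omega : i ≤ h)]
    rw [e1, e2, hc]
  calc (-1:ℤ)^s * (d.choose (2*s+e)) * (b.choose (h-s)) * ∏ i ∈ range M, ((b:ℤ) - h + 1 + i)
      = ((-1:ℤ)^s * (d.choose (2*s+e))) *
        (((b.choose (h-s) : ℤ)) * ((∏ i ∈ range s, ((b:ℤ) - h + 1 + i)) *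
          ∏ i ∈ range (M - s), ((h:ℤ) + e + 1 + s + i))) := by rw [hsplit]; ring
    _ = ((-1:ℤ)^s * (d.choose (2*s+e))) *
        ((((b.choose (h-s) : ℤ)) * (∏ i ∈ range s, ((b:ℤ) - h + 1 + i))) *
          ∏ i ∈ range (M - s), ((h:ℤ) + e + 1 + s + i)) := by ring
    _ = ((-1:ℤ)^s * (d.choose (2*s+e))) *
        ((((b.choose h : ℤ)) * (∏ i ∈ range s, ((h:ℤ) - i))) *
          ∏ i ∈ range (M - s), ((h:ℤ) + e + 1 + s + i)) := by rw [hcast]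
    _ = (b.choose h : ℤ) * ((-1:ℤ)^s * (d.choose (2*s+e)) * (∏ i ∈ range s, ((h:ℤ) - i)) *
          ∏ i ∈ range (M - s), ((h:ℤ) + e + 1 + s + i)) := by ring

lemma G_eval_zero_pos (d e : ℕ) (hed : e ≤ d) : 0 < (G d e).eval 0 := by
  rw [G_eval]
  rw [Finset.sum_eq_single 0]
  · refine mul_pos (mul_pos (mul_pos ?_ ?_) ?_) ?_
    · norm_num
    · exact_mod_cast Nat.choose_pos (by omega : 2*0+e ≤ d)
    · exact Finset.prod_pos fun i hi => absurd hi (by simp)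
    · exact Finset.prod_pos fun i _ => by positivity
  · intro s _ hs
    have hz : (∏ i ∈ range s, ((0:ℤ) - (i:ℤ))) = 0 := by
      refine Finset.prod_eq_zero (Finset.mem_range.2 (Nat.pos_of_ne_zero hs)) ?_
      simp
    rw [hz]
    ring
  · intro h
    simp at h

lemma G_ne_zero (d e : ℕ) (hed : e ≤ d) : G d e ≠ 0 := by
  intro hG
  have := G_eval_zero_pos d e hed
  rw [hG] at this
  simp at this

lemma exists_root_bound (d e : ℕ) (hed : e ≤ d) :
    ∃ H : ℤ, ∀ z : ℤ, (G d e).eval z = 0 → z ≤ H := by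
  have hfin : Set.Finite {z : ℤ | (G d e).IsRoot z} :=
    Polynomial.finite_setOf_isRoot (G_ne_zero d e hed)
  obtain ⟨H, hH⟩ := hfin.bddAbove
  exact ⟨H, fun z hz => hH hz⟩

lemma S1_shift_ne_zero (d : ℕ) (hd : 1 ≤ d) :
    ∃ B : ℕ, ∀ b : ℕ, B ≤ b → S1 (b+d) b ≠ 0 := by
  obtain ⟨H0, hH0⟩ := exists_root_bound d 0 (by omega)
  obtain ⟨H1, hH1⟩ := exists_root_bound d 1 hd
  refine ⟨2*(max H0 H1).toNat + 2*d + 2, fun b hb hS1 => ?_⟩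
  set e := b % 2 with hedef
  set h := b / 2 with hhdef
  have he : e < 2 := Nat.mod_lt b (by omega)
  have hb2 : b = 2*h + e := by omega
  have hed : e ≤ d := by omega
  have hdb : d ≤ b := by omega
  have hdh : d ≤ h := by omega
  have hpar := S1_shift_parity d b h e he hed hb2 hdb
  rw [hS1] at hpar
  have hZ : Zsum d e b h = 0 := by
    have h1 : ((-1:ℤ)^e * (-1)^h) ≠ 0 := by
      apply mul_ne_zero <;> exact pow_ne_zero _ (by norm_num)
    rcases mul_eq_zero.1 hpar.symm with hc | hc
    · exact absurd hc h1
    · exact hc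
  have hmul := Zsum_mul_eq d e b h he hb2 hdh
  rw [hZ, zero_mul] at hmul
  have hch : (0:ℤ) < (b.choose h : ℤ) := by
    exact_mod_cast Nat.choose_pos (by omega : h ≤ b)
  have heval : (G d e).eval (h:ℤ) = 0 := by
    rcases mul_eq_zero.1 hmul.symm with hc | hc
    · exact absurd hc (ne_of_gt hch)
    · exact hc
  have hle : (h:ℤ) ≤ max H0 H1 := by
    interval_cases e
    · exact le_trans (hH0 _ heval) (le_max_left _ _)
    · exact le_trans (hH1 _ heval) (le_max_right _ _)
  have hgt : (max H0 H1) < (h:ℤ) := by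
    have h1 : (max H0 H1) ≤ ((max H0 H1).toNat : ℤ) := Int.self_le_toNat _
    have h2 : (max H0 H1).toNat < h := by omega
    calc (max H0 H1) ≤ ((max H0 H1).toNat : ℤ) := h1
      _ < (h:ℤ) := by exact_mod_cast h2
  exact absurd hle (not_le.2 hgt)

noncomputable def pathSum (T c : ℕ) (lastIn : Bool) : ℂ :=
  ∑ R ∈ (Finset.range T).powerset,
    if 0 ∈ R ∧ R.card = c ∧ ((T-1) ∈ R ↔ lastIn = true) then (-Complex.I)^(turnsOf T R) else 0

lemma turnsOf_succ_notmem (T : ℕ) (hT : 1 ≤ T) (R : Finset ℕ) (hR : R ∈ (Finset.range T).powerset) :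
    turnsOf (T+1) R = turnsOf T R + (if T-1 ∈ R then 1 else 0) := by
  simp only [Finset.mem_powerset] at hR
  have hTR : T ∉ R := fun h => by simpa using Finset.mem_range.1 (hR h)
  unfold turnsOf
  rw [Nat.Ico_succ_right_eq_insert_Ico hT, Finset.filter_insert]
  by_cases hprev : T - 1 ∈ R
  · have hcond : ¬((T ∈ R) ↔ (T - 1 ∈ R)) := by simp [hTR, hprev]
    rw [if_pos hcond, Finset.card_insert_of_notMem (by simp), if_pos hprev]
  · have hcond : ¬¬((T ∈ R) ↔ (T - 1 ∈ R)) := by simp [hTR, hprev]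
    rw [if_neg hcond, if_neg hprev]
    simp

lemma turnsOf_succ_insert (T : ℕ) (hT : 1 ≤ T) (R : Finset ℕ) (hR : R ∈ (Finset.range T).powerset) :
    turnsOf (T+1) (insert T R) = turnsOf T R + (if T-1 ∈ R then 0 else 1) := by
  simp only [Finset.mem_powerset] at hR
  have hTR : T ∉ R := fun h => by simpa using Finset.mem_range.1 (hR h)
  unfold turnsOf
  rw [Nat.Ico_succ_right_eq_insert_Ico hT, Finset.filter_insert]
  have hT1 : T - 1 ≠ T := by omega
  have hmem : (T - 1 ∈ insert T R) ↔ (T - 1 ∈ R) := by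
    simp [Finset.mem_insert, hT1]
  have hfeq : (Finset.Ico 1 T).filter (fun i => ¬((i ∈ insert T R) ↔ (i - 1 ∈ insert T R)))
      = (Finset.Ico 1 T).filter (fun i => ¬((i ∈ R) ↔ (i - 1 ∈ R))) := by
    refine Finset.filter_congr fun i hi => ?_
    simp only [Finset.mem_Ico] at hi
    have h1 : i ≠ T := by omega
    have h2 : i - 1 ≠ T := by omega
    simp [Finset.mem_insert, h1, h2]
  by_cases hprev : T - 1 ∈ R
  · have hcond : ¬¬((T ∈ insert T R) ↔ (T - 1 ∈ insert T R)) := by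
      simp [Finset.mem_insert_self, hmem, hprev]
    rw [if_neg hcond, hfeq, if_pos hprev]
    simp
  · have hcond : ¬((T ∈ insert T R) ↔ (T - 1 ∈ insert T R)) := by
      simp [Finset.mem_insert_self, hmem, hprev]
    rw [if_pos hcond, hfeq, if_neg hprev]
    rw [Finset.card_insert_of_notMem (by simp [Finset.mem_filter, Finset.mem_Ico])]

lemma turnsOf_one : turnsOf 1 ({0} : Finset ℕ) = 0 := by
  unfold turnsOf
  simp

lemma powerset_split (T : ℕ) (f : Finset ℕ → ℂ) :
    ∑ R ∈ (Finset.range (T+1)).powerset, f R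
      = ∑ R ∈ (Finset.range T).powerset, f R
        + ∑ R ∈ (Finset.range T).powerset, f (insert T R) := by
  rw [Finset.range_add_one, Finset.powerset_insert, Finset.sum_union, Finset.sum_image]
  · intro R1 h1 R2 h2 heq
    simp only [Finset.mem_coe, Finset.mem_powerset] at h1 h2
    have n1 : T ∉ R1 := fun h => by simpa using Finset.mem_range.1 (h1 h)
    have n2 : T ∉ R2 := fun h => by simpa using Finset.mem_range.1 (h2 h)
    rw [← Finset.erase_insert n1, ← Finset.erase_insert n2, heq]
  · rw [Finset.disjoint_left]
    intro A hA hA2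
    simp only [Finset.mem_powerset] at hA
    simp only [Finset.mem_image, Finset.mem_powerset] at hA2
    obtain ⟨B, hB, rfl⟩ := hA2
    have : T ∈ insert T B := Finset.mem_insert_self _ _
    have := hA this
    simp at this

lemma pathSum_one_true (c : ℕ) : pathSum 1 c true = if c = 1 then 1 else 0 := by
  unfold pathSum
  rw [powerset_split 0]
  rw [Finset.range_zero, Finset.powerset_empty, Finset.sum_singleton, Finset.sum_singleton]
  rw [show (insert 0 ∅ : Finset ℕ) = {0} from rfl]
  simp only [Finset.notMem_empty, false_and, if_false, zero_add]
  by_cases hc : c = 1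
  · subst hc
    rw [if_pos (by simp), turnsOf_one]
    simp
  · rw [if_neg (by simp [Finset.card_singleton]; intro h; omega), if_neg hc]

lemma pathSum_one_false (c : ℕ) : pathSum 1 c false = 0 := by
  unfold pathSum
  rw [powerset_split 0]
  rw [Finset.range_zero, Finset.powerset_empty, Finset.sum_singleton, Finset.sum_singleton]
  rw [show (insert 0 ∅ : Finset ℕ) = {0} from rfl]
  simp

lemma pathSum_zero_c (T : ℕ) (lastIn : Bool) : pathSum T 0 lastIn = 0 := by
  unfold pathSum
  refine Finset.sum_eq_zero fun R _ => ?_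
  have : ¬(0 ∈ R ∧ R.card = 0 ∧ ((T-1) ∈ R ↔ lastIn = true)) := by
    rintro ⟨h1, h2, _⟩
    rw [Finset.card_eq_zero] at h2
    simp [h2] at h1
  rw [if_neg this]

lemma pathSum_succ_false (T c : ℕ) (hT : 1 ≤ T) :
    pathSum (T+1) c false = pathSum T c false + (-Complex.I) * pathSum T c true := by
  unfold pathSum
  rw [powerset_split]
  have himg : ∀ R ∈ (Finset.range T).powerset,
      (if 0 ∈ insert T R ∧ (insert T R).card = c ∧ ((T+1-1) ∈ insert T R ↔ false = true)
        then (-Complex.I)^(turnsOf (T+1) (insert T R)) else 0) = 0 := by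
    intro R _
    refine if_neg ?_
    rintro ⟨-, -, hiff⟩
    exact absurd (hiff.1 (by simp)) (by simp)
  rw [Finset.sum_eq_zero himg, add_zero, Finset.mul_sum, ← Finset.sum_add_distrib]
  refine Finset.sum_congr rfl fun R hR => ?_
  have hRs := Finset.mem_powerset.1 hR
  have hTR : T ∉ R := fun h => by simpa using Finset.mem_range.1 (hRs h)
  rw [turnsOf_succ_notmem T hT R hR]
  have hc1 : ((T+1-1) ∈ R ↔ false = true) := by simp [hTR]
  by_cases h0 : 0 ∈ R ∧ R.card = c
  · by_cases hprev : T - 1 ∈ R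
    · rw [if_pos ⟨h0.1, h0.2, hc1⟩, if_pos hprev,
        if_neg (fun hcon => by simp [hprev] at hcon),
        if_pos ⟨h0.1, h0.2, by simp [hprev]⟩]
      rw [pow_succ]
      ring
    · rw [if_pos ⟨h0.1, h0.2, hc1⟩, if_neg hprev,
        if_pos ⟨h0.1, h0.2, by simp [hprev]⟩,
        if_neg (fun hcon => by simp [hprev] at hcon)]
      simp
  · rw [if_neg (fun hcon => h0 ⟨hcon.1, hcon.2.1⟩),
      if_neg (fun hcon => h0 ⟨hcon.1, hcon.2.1⟩),
      if_neg (fun hcon => h0 ⟨hcon.1, hcon.2.1⟩)]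
    simp

lemma pathSum_succ_true (T c : ℕ) (hT : 1 ≤ T) :
    pathSum (T+1) (c+1) true = pathSum T c true + (-Complex.I) * pathSum T c false := by
  unfold pathSum
  rw [powerset_split]
  have hfst : ∀ R ∈ (Finset.range T).powerset,
      (if 0 ∈ R ∧ R.card = c+1 ∧ ((T+1-1) ∈ R ↔ true = true)
        then (-Complex.I)^(turnsOf (T+1) R) else 0) = 0 := by
    intro R hR
    have hRs := Finset.mem_powerset.1 hR
    have hTR : T ∉ R := fun h => by simpa using Finset.mem_range.1 (hRs h)
    refine if_neg ?_
    rintro ⟨-, -, hiff⟩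
    have : T + 1 - 1 ∈ R := hiff.2 rfl
    exact hTR (by simpa using this)
  rw [Finset.sum_eq_zero hfst, zero_add, Finset.mul_sum, ← Finset.sum_add_distrib]
  refine Finset.sum_congr rfl fun R hR => ?_
  have hRs := Finset.mem_powerset.1 hR
  have hTR : T ∉ R := fun h => by simpa using Finset.mem_range.1 (hRs h)
  rw [turnsOf_succ_insert T hT R hR]
  have hT0 : (0:ℕ) ≠ T := by omega
  have hmem0 : 0 ∈ insert T R ↔ 0 ∈ R := by simp [Finset.mem_insert, hT0]
  have hcard : (insert T R).card = R.card + 1 := Finset.card_insert_of_notMem hTR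
  have hc1 : ((T+1-1) ∈ insert T R ↔ true = true) := by simp
  by_cases h0 : 0 ∈ R ∧ R.card = c
  · by_cases hprev : T - 1 ∈ R
    · rw [if_pos ⟨hmem0.2 h0.1, by rw [hcard, h0.2], hc1⟩, if_pos hprev,
        if_pos ⟨h0.1, h0.2, by simp [hprev]⟩,
        if_neg (fun hcon => by simp [hprev] at hcon)]
      simp
    · rw [if_pos ⟨hmem0.2 h0.1, by rw [hcard, h0.2], hc1⟩, if_neg hprev,
        if_neg (fun hcon => by simp [hprev] at hcon),
        if_pos ⟨h0.1, h0.2, by simp [hprev]⟩]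
      rw [pow_succ]
      ring
  · have hno : ¬(0 ∈ insert T R ∧ (insert T R).card = c + 1 ∧
        ((T+1-1) ∈ insert T R ↔ true = true)) := by
      rintro ⟨ha, hb, -⟩
      exact h0 ⟨hmem0.1 ha, by omega⟩
    rw [if_neg hno,
      if_neg (fun hcon => h0 ⟨hcon.1, hcon.2.1⟩),
      if_neg (fun hcon => h0 ⟨hcon.1, hcon.2.1⟩)]
    simp

def S2 (n m : ℕ) : ℤ := ∑ j ∈ range (m+1), (-1:ℤ)^(j+1) * (n.choose (j+1)) * (m.choose j)

lemma S2_zero (m : ℕ) : S2 0 m = 0 := by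
  unfold S2
  refine Finset.sum_eq_zero fun j _ => by simp

lemma S1_zero_right (n : ℕ) : S1 n 0 = 1 := by
  unfold S1
  simp

lemma S2_succ (n m : ℕ) : S2 (n+1) m = S2 n m - S1 n m := by
  unfold S2 S1
  rw [← Finset.sum_sub_distrib]
  refine Finset.sum_congr rfl fun j _ => ?_
  rw [Nat.choose_succ_succ]
  push_cast
  ring

lemma S1_succ (n m : ℕ) : S1 n (m+1) = S1 n m + S2 n m := by
  unfold S1 S2
  rw [Finset.sum_range_succ' (fun j => (-1:ℤ)^j * (n.choose j) * ((m+1).choose j)) (m+1)]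
  rw [Finset.sum_range_succ' (fun j => (-1:ℤ)^j * (n.choose j) * (m.choose j)) m]
  simp only [pow_zero, one_mul, Nat.choose_zero_right, Nat.cast_one, mul_one]
  have hsplit : ∀ i ∈ range (m+1), (-1:ℤ)^(i+1) * (n.choose (i+1)) * ((m+1).choose (i+1))
      = (-1:ℤ)^(i+1) * (n.choose (i+1)) * (m.choose (i+1))
        + (-1:ℤ)^(i+1) * (n.choose (i+1)) * (m.choose i) := by
    intro i _
    rw [Nat.choose_succ_succ]
    push_cast
    ring
  rw [Finset.sum_congr rfl hsplit, Finset.sum_add_distrib]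
  have h1 : ∑ i ∈ range (m+1), (-1:ℤ)^(i+1) * (n.choose (i+1)) * (m.choose (i+1))
      = ∑ i ∈ range m, (-1:ℤ)^(i+1) * (n.choose (i+1)) * (m.choose (i+1)) := by
    rw [Finset.sum_range_succ]
    simp [Nat.choose_succ_self]
  rw [h1]
  ring

noncomputable def UR (T c : ℕ) : ℂ :=
  if c = 0 ∨ T < c then 0 else if c = T then 1 else ((S2 (c-1) (T-c-1) : ℤ) : ℂ)

noncomputable def UL (T c : ℕ) : ℂ :=
  if c = 0 ∨ T ≤ c then 0 else (-Complex.I) * ((S1 (c-1) (T-c-1) : ℤ) : ℂ)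

lemma pathSum_eq : ∀ T, 1 ≤ T → ∀ c, pathSum T c true = UR T c ∧ pathSum T c false = UL T c := by
  intro T
  induction T with
  | zero => omega
  | succ T ih =>
    intro _ c
    by_cases hT : T = 0
    · subst hT
      constructor
      · rw [pathSum_one_true]
        unfold UR
        rcases Nat.lt_trichotomy c 1 with h | h | h
        · interval_cases c
          simp
        · subst h; simp
        · rw [if_neg (show ¬(c = 1) by omega), if_pos (show c = 0 ∨ 1 < c by omega)]
      · rw [pathSum_one_false]
        unfold UL
        rw [if_pos (show c = 0 ∨ 1 ≤ c by omega)]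
    · have hT1 : 1 ≤ T := by omega
      constructor
      · -- true branch
        rcases Nat.eq_zero_or_pos c with rfl | hc
        · rw [pathSum_zero_c]
          unfold UR
          rw [if_pos (Or.inl rfl)]
        obtain ⟨c', rfl⟩ : ∃ c', c = c' + 1 := ⟨c - 1, by omega⟩
        rw [pathSum_succ_true T c' hT1, (ih hT1 c').1, (ih hT1 c').2]
        unfold UR UL
        rcases Nat.lt_trichotomy c' T with hlt | rfl | hgt
        · rcases Nat.eq_zero_or_pos c' with rfl | hc'
          · rw [if_pos (show (0:ℕ) = 0 ∨ T < 0 from Or.inl rfl),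
              if_pos (show (0:ℕ) = 0 ∨ T ≤ 0 from Or.inl rfl),
              if_neg (show ¬((0:ℕ)+1 = 0 ∨ T + 1 < 0+1) by omega),
              if_neg (show ¬((0:ℕ)+1 = T+1) by omega)]
            simp [S2_zero]
          · rw [if_neg (show ¬(c' = 0 ∨ T < c') by omega),
              if_neg (show ¬(c' = T) by omega),
              if_neg (show ¬(c' = 0 ∨ T ≤ c') by omega),
              if_neg (show ¬(c'+1 = 0 ∨ T + 1 < c'+1) by omega),
              if_neg (show ¬(c'+1 = T+1) by omega)]
            have harg : T + 1 - (c'+1) - 1 = T - c' - 1 := by omega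
            have harg2 : c' + 1 - 1 = c' - 1 + 1 := by omega
            rw [harg, harg2, S2_succ]
            push_cast
            ring_nf
            rw [Complex.I_sq]
            ring
        · rw [if_neg (show ¬(c' = 0 ∨ c' < c') by omega),
            if_pos (show c' = c' from rfl),
            if_pos (show c' = 0 ∨ c' ≤ c' from Or.inr le_rfl),
            if_neg (show ¬(c'+1 = 0 ∨ c' + 1 < c'+1) by omega),
            if_pos (show c'+1 = c'+1 from rfl)]
          simp
        · rw [if_pos (show c' = 0 ∨ T < c' from Or.inr hgt),
            if_pos (show c' = 0 ∨ T ≤ c' from Or.inr (le_of_lt hgt)),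
            if_pos (show c'+1 = 0 ∨ T + 1 < c'+1 by omega)]
          simp
      · -- false branch
        rw [pathSum_succ_false T c hT1, (ih hT1 c).1, (ih hT1 c).2]
        unfold UR UL
        rcases Nat.eq_zero_or_pos c with rfl | hc
        · rw [if_pos (show (0:ℕ) = 0 ∨ T ≤ 0 from Or.inl rfl),
            if_pos (show (0:ℕ) = 0 ∨ T < 0 from Or.inl rfl),
            if_pos (show (0:ℕ) = 0 ∨ T+1 ≤ 0 from Or.inl rfl)]
          simp
        · rcases Nat.lt_trichotomy c T with hlt | rfl | hgt
          · rw [if_neg (show ¬(c = 0 ∨ T ≤ c) by omega),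
              if_neg (show ¬(c = 0 ∨ T < c) by omega),
              if_neg (show ¬(c = T) by omega),
              if_neg (show ¬(c = 0 ∨ T + 1 ≤ c) by omega)]
            have harg : T + 1 - c - 1 = (T - c - 1) + 1 := by omega
            rw [harg, S1_succ]
            push_cast
            ring
          · rw [if_pos (show c = 0 ∨ c ≤ c from Or.inr le_rfl),
              if_neg (show ¬(c = 0 ∨ c < c) by omega),
              if_pos (show c = c from rfl),
              if_neg (show ¬(c = 0 ∨ c + 1 ≤ c) by omega)]
            have harg : c + 1 - c - 1 = 0 := by omega
            rw [harg, S1_zero_right]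
            simp
          · rw [if_pos (show c = 0 ∨ T ≤ c from Or.inr (le_of_lt hgt)),
              if_pos (show c = 0 ∨ T < c from Or.inr hgt),
              if_pos (show c = 0 ∨ T + 1 ≤ c by omega)]
            simp

lemma waveA_sum_eq (x : ℤ) (c l : ℕ) (hx : (c:ℤ) - l = x) :
    (∑ R ∈ (Finset.range (c+l)).powerset,
      if 0 ∈ R ∧ 2 * (R.card : ℤ) - ((c+l : ℕ) : ℤ) = x then
        (-Complex.I) ^ turnsOf (c+l) R else 0)
      = pathSum (c+l) c true + pathSum (c+l) c false := by
  unfold pathSum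
  rw [← Finset.sum_add_distrib]
  refine Finset.sum_congr rfl fun R _ => ?_
  have hcond : (2 * (R.card : ℤ) - ((c+l : ℕ) : ℤ) = x) ↔ R.card = c := by
    push_cast
    omega
  by_cases h0 : 0 ∈ R
  · by_cases hB : R.card = c
    · by_cases hT1 : (c+l-1) ∈ R
      · rw [if_pos ⟨h0, hcond.2 hB⟩, if_pos ⟨h0, hB, by simp [hT1]⟩,
          if_neg (fun hcon => by simp [hT1] at hcon)]
        ring
      · rw [if_pos ⟨h0, hcond.2 hB⟩, if_neg (fun hcon => by simp [hT1] at hcon),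
          if_pos ⟨h0, hB, by simp [hT1]⟩]
        ring
    · rw [if_neg (fun hcon => hB (hcond.1 hcon.2)),
        if_neg (fun hcon => hB hcon.2.1), if_neg (fun hcon => hB hcon.2.1)]
      simp
  · rw [if_neg (fun hcon => h0 hcon.1), if_neg (fun hcon => h0 hcon.1),
      if_neg (fun hcon => h0 hcon.1)]
    simp

lemma waveA_re (x : ℤ) (c l : ℕ) (hc : 1 ≤ c) (hl : 1 ≤ l) (hx : (c:ℤ) - l = x) :
    (waveA x (c + l) 1).re
      = (2:ℝ) ^ ((1 - ((c+l : ℕ) : ℝ)) / 2) * ((S1 (c-1) (l-1) : ℤ) : ℝ) := by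
  unfold waveA
  simp only [Complex.ofReal_one, mul_one, one_pow]
  rw [waveA_sum_eq x c l hx,
    (pathSum_eq (c+l) (by omega) c).1, (pathSum_eq (c+l) (by omega) c).2]
  unfold UR UL
  rw [if_neg (show ¬(c = 0 ∨ c + l < c) by omega),
    if_neg (show ¬(c = c + l) by omega),
    if_neg (show ¬(c = 0 ∨ c + l ≤ c) by omega)]
  have harg : c + l - c - 1 = l - 1 := by omega
  rw [harg]
  have hz : ((S2 (c-1) (l-1) : ℤ) : ℂ) + (-Complex.I) * ((S1 (c-1) (l-1) : ℤ) : ℂ)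
      = Complex.mk (S2 (c-1) (l-1) : ℝ) (-(S1 (c-1) (l-1) : ℝ)) := by
    apply Complex.ext <;> simp
  have hone : (1:ℝ) + 1 = 2 := by norm_num
  rw [hz]
  rw [mul_assoc, Complex.re_ofReal_mul]
  rw [hone]
  congr 1
  simp [Complex.mul_re]


end AuxFeynman

theorem stmt7 (x : ℤ) (hx : x ≠ 0) :
    ∃ t₀ : ℤ, ∀ t : ℤ, t₀ < t → t % 2 ≠ x % 2 → a1 (x : ℝ) (t : ℝ) 1 1 ≠ 0 := by
  set d := x.natAbs with hddef
  have hd : 1 ≤ d := Int.natAbs_pos.2 hx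
  obtain ⟨B, hB⟩ := S1_shift_ne_zero d hd
  refine ⟨2*(B:ℤ) + 2*d + 4, fun t ht hpar => ?_⟩
  have hxd : x = (d:ℤ) ∨ x = -(d:ℤ) := Int.natAbs_eq x
  have hT0 : (0:ℤ) ≤ t + 1 := by omega
  set T : ℕ := (t+1).toNat with hTdef
  have hT : (T:ℤ) = t + 1 := Int.toNat_of_nonneg hT0
  have hpar2 : (2:ℤ) ∣ (t + 1 + x) := by omega
  set c : ℕ := ((t+1+x)/2).toNat with hcdef
  set l : ℕ := ((t+1-x)/2).toNat with hldef
  have hcz : (c:ℤ) = (t+1+x)/2 := Int.toNat_of_nonneg (by omega)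
  have hlz : (l:ℤ) = (t+1-x)/2 := Int.toNat_of_nonneg (by omega)
  have hcl : c + l = T := by omega
  have hcx : (c:ℤ) - l = x := by omega
  have hc1 : 1 ≤ c := by omega
  have hl1 : 1 ≤ l := by omega
  have ha : a1 (x:ℝ) (t:ℝ) 1 1 = (waveA x T 1).re := by
    unfold a1 wf
    have h1 : ((x:ℝ)) / 1 = ((x:ℤ):ℝ) := by norm_num
    have h2 : ((t:ℝ) + 1) / 1 = (((t+1:ℤ)):ℝ) := by push_cast; ring
    rw [h1, h2, Int.floor_intCast, Int.floor_intCast]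
    norm_num
    rfl
  rw [ha, ← hcl, waveA_re x c l hc1 hl1 hcx]
  have hr : (2:ℝ) ^ ((1 - ((c+l : ℕ) : ℝ)) / 2) ≠ 0 :=
    (Real.rpow_pos_of_pos (by norm_num) _).ne'
  have hS : S1 (c-1) (l-1) ≠ 0 := by
    rcases hxd with hpos | hneg
    · have hc' : c - 1 = (l-1) + d := by omega
      rw [hc']
      exact hB (l-1) (by omega)
    · have hl' : l - 1 = (c-1) + d := by omega
      rw [S1_symm, hl']
      exact hB (c-1) (by omega)
  intro hcon
  rcases mul_eq_zero.1 hcon with h | h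
  · exact hr h
  · exact hS (by exact_mod_cast h)
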